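/- For every integer p ≥ 3, one has (p - 1)·α_p^{p-2} > 1; equivalently, setting β_p = α_p^{p-2}, one has (1 - p)·β_p < -1. -/

import Mathlib

theorem alpha_pow_ineq (p : ℕ) (hp : 3 ≤ p) (α : ℝ)
    (hα : α ∈ Set.Ioo (0 : ℝ) 1) (hroot : α ^ (p - 1) + α - 1 = 0) :
    ((p : ℝ) - 1) * α ^ (p - 2) > 1 ∧ (1 - (p : ℝ)) * α ^ (p - 2) < -1 := by
  obtain ⟨hα0, hα1⟩ := hα
  obtain ⟨k, rfl⟩ : ∃ k, p = k + 3 := ⟨p - 3, by omega⟩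
  rw [show k + 3 - 1 = k + 2 from by omega] at hroot
  rw [show k + 3 - 2 = k + 1 from by omega]
  have hk : (0:ℝ) ≤ (k:ℝ) := Nat.cast_nonneg k
  set c : ℝ := (k:ℝ) + 3 with hc_def
  have hc : (0:ℝ) < c := by positivity
  set a : ℝ := 1 - 1/c with ha_def
  have ha0 : 0 ≤ a := by
    have : 1/c ≤ 1 := by rw [div_le_one hc]; linarith
    simp only [ha_def]; linarith
  have hB : 2/c ≤ a ^ (k+1) := by
    have hm2 : (-2:ℝ) ≤ -1/c := by
      have h3 : 1/c ≤ 2 := by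
        rw [div_le_iff₀ hc]; simp only [hc_def]; linarith
      rw [neg_div]
      exact neg_le_neg h3
    have hber := one_add_mul_le_pow hm2 (k+1)
    have heq : (1:ℝ) + (-1/c) = a := by simp only [ha_def]; ring
    rw [heq] at hber
    refine le_trans ?_ hber
    have h2 : 1 + (↑(k+1):ℝ) * (-1/c) = (c - ((k:ℝ)+1))/c := by
      push_cast; field_simp; ring
    rw [h2]
    gcongr
    simp only [hc_def]; linarith
  have hcrit : α < ((k:ℝ)+2)/c := by
    by_contra h
    push_neg at h
    have ha_eq : a = ((k:ℝ)+2)/c := by simp only [ha_def, hc_def]; field_simp; ring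
    rw [← ha_eq] at h
    have hge : a ^ (k+2) ≤ α ^ (k+2) := pow_le_pow_left₀ ha0 h (k+2)
    have hge2 : (2/c) * a ≤ a ^ (k+2) := by
      rw [pow_succ]
      exact mul_le_mul_of_nonneg_right hB ha0
    have hle : α ^ (k+2) ≤ 1/c := by
      have h' : ((k:ℝ)+2) ≤ α * c := by
        rw [ha_eq, div_le_iff₀ hc] at h; exact h
      have : (1 - α) * c ≤ 1 := by simp only [hc_def] at h' ⊢; nlinarith
      have h2 : 1 - α ≤ 1/c := by rw [le_div_iff₀ hc]; exact this
      linarith [hroot]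
    have hfin : (2/c) * (((k:ℝ)+2)/c) ≤ 1/c := by rw [← ha_eq]; linarith
    rw [div_mul_div_comm, div_le_div_iff₀ (by positivity) hc] at hfin
    simp only [hc_def] at hfin
    nlinarith
  have hpow : α ^ (k+1) * α = 1 - α := by
    rw [← pow_succ]; linarith
  have hgoal : ((k:ℝ)+2) * α ^ (k+1) > 1 := by
    rw [gt_iff_lt, ← mul_lt_mul_iff_left₀ hα0]
    have heq : ((k:ℝ)+2) * α ^ (k+1) * α = ((k:ℝ)+2) * (1 - α) := by
      rw [mul_assoc, hpow]
    rw [heq]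
    rw [lt_div_iff₀ hc] at hcrit
    simp only [hc_def] at hcrit
    nlinarith
  constructor <;> push_cast <;> nlinarith [hgoal]
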